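/- Let d ≥ 2, let k ∈ {1,…,d−1}, and let p_1,…,p_m be distinct elements of {1,…,d−1} enumerated so that |p_1 − k| ≥ |p_2 − k| ≥ ⋯ ≥ |p_m − k|. Setting A_i = {p_1,…,p_i}, one has for every i ∈ {1,…,m}: i·a_k(A_i) − ∑_{j=1}^{i} b_k(p_j) ≥ i(i−1)/2. -/

import Mathlib

open Finset

/-- The set of pairs `(i,j)` with `1 ≤ i < j ≤ d` separated by some `p ∈ A`,
i.e. `i ≤ p < j`. -/
def pairSep (d : ℕ) (A : Finset ℕ) : Finset (ℕ × ℕ) :=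
  (Finset.Icc 1 d ×ˢ Finset.Icc 1 d).filter fun q => ∃ p ∈ A, q.1 ≤ p ∧ p < q.2

/-- `a_k(A)`: the number of pairs `(i,j) ∈ S(A)` with `i ≤ k < j`.
`b_k(p)` is `ak d k {p}`. -/
def ak (d k : ℕ) (A : Finset ℕ) : ℕ :=
  ((pairSep d A).filter fun q => q.1 ≤ k ∧ k < q.2).card

/-- Let `p 0, p 1, …, p (m-1)` (indices shifted by one from the paper's
`p_1,…,p_m`) be distinct elements of `{1,…,d-1}` enumerated so that
`|p_1 - k| ≥ |p_2 - k| ≥ ⋯ ≥ |p_m - k|`.  Setting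
`A_i = {p_1,…,p_i}`, for every `1 ≤ i ≤ m` one has
`i·a_k(A_i) − ∑_{j=1}^{i} b_k(p_j) ≥ i(i−1)/2`. -/
lemma key (d k m : ℕ) (hd : 2 ≤ d) (hk : k ∈ Finset.Icc 1 (d - 1))
    (p : ℕ → ℕ) (hmem : ∀ j < m, p j ∈ Finset.Icc 1 (d - 1))
    (hinj : ∀ i < m, ∀ j < m, p i = p j → i = j)
    (hsort : ∀ i j, i ≤ j → j < m → |(p j : ℤ) - (k : ℤ)| ≤ |(p i : ℤ) - (k : ℤ)|)
    (i j : ℕ) (hj : j < i) (him : i ≤ m) :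
    ak d k {p j} + (i - 1 - j) ≤ ak d k ((Finset.range i).image p) := by
  have hk1 : 1 ≤ k := (Finset.mem_Icc.mp hk).1
  have hk2 : k ≤ d - 1 := (Finset.mem_Icc.mp hk).2
  have hkd : k + 1 ≤ d := by omega
  set A := (Finset.range i).image p with hA
  set S := (pairSep d A).filter (fun q => q.1 ≤ k ∧ k < q.2) with hS
  set Sj := (pairSep d {p j}).filter (fun q => q.1 ≤ k ∧ k < q.2) with hSj
  have hsub : Sj ⊆ S := by
    intro q hq
    simp only [hS, hSj, pairSep, Finset.mem_filter, Finset.mem_product,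
      Finset.mem_singleton] at hq ⊢
    obtain ⟨⟨⟨h1, h2⟩, x, hx, h3, h4⟩, h5⟩ := hq
    exact ⟨⟨⟨h1, h2⟩, x, by
      simp only [hA, Finset.mem_image, Finset.mem_range]
      exact ⟨⟨j, hj, hx.symm⟩, h3, h4⟩⟩, h5⟩
  -- injection from Ico (j+1) i into S \ Sj, when p j ≠ k
  have hdiff : i - 1 - j ≤ (S \ Sj).card := by
    by_cases hpk : p j = k
    · -- then i ≤ j + 1
      have : i ≤ j + 1 := by
        by_contra h
        have hj1 : j + 1 < m := by omega
        have := hsort j (j+1) (by omega) hj1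
        rw [hpk] at this
        simp at this
        have : p (j+1) = k := by omega
        have := hinj j (by omega) (j+1) hj1 (by rw [hpk, this])
        omega
      simp [Nat.sub_sub]
      omega
    · have := Finset.card_le_card_of_injOn
        (f := fun j' => if p j' ≤ k then (p j', k + 1) else (k, p j' + 1))
        (s := Finset.Ico (j+1) i) (t := S \ Sj)
        ?_ ?_
      · calc i - 1 - j ≤ (Finset.Ico (j+1) i).card := by
              rw [Nat.card_Ico]; omega
          _ ≤ (S \ Sj).card := this
      · -- maps into
        intro j' hj'
        rw [Finset.mem_coe, Finset.mem_Ico] at hj'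
        have hj'm : j' < m := by omega
        have hpj' : 1 ≤ p j' ∧ p j' ≤ d - 1 := Finset.mem_Icc.mp (hmem j' hj'm)
        have hpj : 1 ≤ p j ∧ p j ≤ d - 1 := Finset.mem_Icc.mp (hmem j (by omega))
        have hne : p j ≠ p j' := fun h => by
          have := hinj j (by omega) j' hj'm h; omega
        have hsort' := hsort j j' (by omega) hj'm
        have hmemA : p j' ∈ A := by
          simp only [hA, Finset.mem_image, Finset.mem_range]
          exact ⟨j', hj'.2, rfl⟩
        rw [Finset.mem_coe, Finset.mem_sdiff]
        by_cases hle : p j' ≤ k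
        · simp only [hle, if_true]
          constructor
          · simp only [hS, pairSep, Finset.mem_filter, Finset.mem_product,
              Finset.mem_Icc]
            exact ⟨⟨⟨⟨hpj'.1, by omega⟩, ⟨by omega, hkd⟩⟩,
              p j', hmemA, le_refl _, by omega⟩, hle, by omega⟩
          · simp only [hSj, pairSep, Finset.mem_filter, Finset.mem_product,
              Finset.mem_singleton]
            rintro ⟨⟨-, x, hx, h3, h4⟩, -⟩
            subst hx
            -- h3 : p j' ≤ p j, h4 : p j < k + 1
            have hpjk : p j ≤ k := by omega
            -- sortedness: k - p j' ≤ k - p j, so p j ≤ p j'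
            have : (k : ℤ) - p j' ≤ k - p j := by
              rw [abs_of_nonpos (by push_cast; omega), abs_of_nonpos (by push_cast; omega)] at hsort'
              omega
            omega
        · simp only [hle, if_false]
          push_neg at hle
          constructor
          · simp only [hS, pairSep, Finset.mem_filter, Finset.mem_product,
              Finset.mem_Icc]
            exact ⟨⟨⟨⟨hk1, by omega⟩, ⟨by omega, by omega⟩⟩,
              p j', hmemA, by omega, by omega⟩, le_refl _, by omega⟩
          · simp only [hSj, pairSep, Finset.mem_filter, Finset.mem_product,
              Finset.mem_singleton]
            rintro ⟨⟨-, x, hx, h3, h4⟩, -⟩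
            subst hx
            -- h3 : k ≤ p j, h4 : p j < p j' + 1
            have hpjk : k < p j := by omega
            have : (p j' : ℤ) - k ≤ p j - k := by
              rw [abs_of_nonneg (by push_cast; omega), abs_of_nonneg (by push_cast; omega)] at hsort'
              omega
            omega
      · -- injective on
        intro a ha b hb hab
        simp only [Finset.coe_Ico, Set.mem_Ico] at ha hb
        dsimp only at hab
        have ham : a < m := by omega
        have hbm : b < m := by omega
        by_cases h1 : p a ≤ k <;> by_cases h2 : p b ≤ k <;>
          simp only [h1, h2, if_true, if_false, Prod.mk.injEq] at hab
        · exact hinj a ham b hbm hab.1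
        · omega
        · omega
        · exact hinj a ham b hbm (by omega)
  have hcard : ak d k {p j} + (i - 1 - j) ≤ ak d k A := by
    have := Finset.card_sdiff_add_card_eq_card hsub
    unfold ak
    rw [← hS, ← hSj, ← this]
    omega
  exact hcard

theorem stmt6 (d k m : ℕ) (hd : 2 ≤ d) (hk : k ∈ Finset.Icc 1 (d - 1))
    (p : ℕ → ℕ) (hmem : ∀ j < m, p j ∈ Finset.Icc 1 (d - 1))
    (hinj : ∀ i < m, ∀ j < m, p i = p j → i = j)
    (hsort : ∀ i j, i ≤ j → j < m → |(p j : ℤ) - (k : ℤ)| ≤ |(p i : ℤ) - (k : ℤ)|) :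
    ∀ i, 1 ≤ i → i ≤ m →
      (i : ℝ) * (ak d k ((Finset.range i).image p) : ℝ)
          - ∑ j ∈ Finset.range i, (ak d k {p j} : ℝ) ≥
        (i : ℝ) * ((i : ℝ) - 1) / 2 := by
  intro i h1 him
  have key' : ∀ j ∈ Finset.range i,
      (ak d k {p j} : ℝ) + ((i:ℝ) - 1 - j) ≤ (ak d k ((Finset.range i).image p) : ℝ) := by
    intro j hj
    rw [Finset.mem_range] at hj
    have hkey := key d k m hd hk p hmem hinj hsort i j hj him
    have hc : ((i - 1 - j : ℕ) : ℝ) = (i:ℝ) - 1 - j := by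
      have : i - 1 - j = i - (1 + j) := by omega
      rw [this, Nat.cast_sub (by omega)]
      push_cast; ring
    calc (ak d k {p j} : ℝ) + ((i:ℝ) - 1 - j)
        = ((ak d k {p j} + (i - 1 - j) : ℕ) : ℝ) := by rw [Nat.cast_add, hc]
      _ ≤ _ := by exact_mod_cast hkey
  have h2 := Finset.sum_le_sum key'
  rw [Finset.sum_add_distrib, Finset.sum_const, Finset.card_range, nsmul_eq_mul] at h2
  have hgauss : ∑ j ∈ Finset.range i, (j : ℝ) = (i:ℝ) * ((i:ℝ) - 1) / 2 := by
    have h := Finset.sum_range_id_mul_two i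
    have h' : ((∑ j ∈ Finset.range i, j : ℕ) : ℝ) * 2 = (i:ℝ) * ((i:ℝ) - 1) := by
      rw [← Nat.cast_ofNat, ← Nat.cast_mul, h, Nat.cast_mul, Nat.cast_sub h1]
      push_cast; ring
    push_cast at h'
    linarith
  have h3 : ∑ j ∈ Finset.range i, ((i:ℝ) - 1 - j)
      = (i:ℝ) * ((i:ℝ) - 1) - (i:ℝ) * ((i:ℝ) - 1) / 2 := by
    rw [Finset.sum_sub_distrib, Finset.sum_const, Finset.card_range, nsmul_eq_mul, hgauss]
  rw [h3] at h2
  linarith
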